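/- Let ε ∈ {0, 1} and let v₀, w_{m₀}, L₀, h₀ be real numbers with v₀ > 0, w_{m₀} > 0, L₀ > 0, h₀ > 0 and v₀ > ε·w_{m₀}, and let γᵉ > 0 be the unique positive real number satisfying (2·v₀·h₀ − L₀·γᵉ)·exp(−(γᵉ)²) = (w_{m₀} + L₀·(γᵉ)²)·(√π·erf(γᵉ) + 2·h₀·ε). Define sᵉ(t) := 2·γᵉ·√t for t ≥ 0 and, for 0 ≤ z ≤ sᵉ(t), t > 0, wᵉ(z,t) := (2·√t·(2·h₀·v₀ − L₀·γᵉ)/(√π·erf(γᵉ) + 2·h₀·ε))·[exp(−z²/(4t)) + (z·√π/(2·√t))·erf(z/(2·√t))] − z·(2·L₀·γᵉ·h₀·ε + 2·h₀·v₀·√π·erf(γᵉ))/(√π·erf(γᵉ) + 2·h₀·ε). Then for all t > 0: (i) ∂²wᵉ/∂z²(z,t) = ∂wᵉ/∂t(z,t) for all 0 < z < sᵉ(t); (ii) ∂wᵉ/∂z(sᵉ(t),t) = −L₀·√t·(sᵉ)'(t); (iii) wᵉ(sᵉ(t),t) = 2·w_{m₀}·√t; (iv) ∂wᵉ/∂z(0,t)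 = (h₀/√t)·(ε·wᵉ(0,t) − 2·v₀·√t); and (v) sᵉ(0) = 0. -/

import Mathlib

open Real MeasureTheory Set

noncomputable section

/-- The error function `erf x = (2/√π) ∫₀ˣ exp(−u²) du`. -/
def erf (x : ℝ) : ℝ := (2 / Real.sqrt π) * ∫ u in (0:ℝ)..x, Real.exp (-u ^ 2)

/-- Partial derivative in the first (space) variable. -/
def pz (f : ℝ → ℝ → ℝ) (z t : ℝ) : ℝ := deriv (fun z' => f z' t) z

/-- Partial derivative in the second (time) variable. -/
def pt (f : ℝ → ℝ → ℝ) (z t : ℝ) : ℝ := deriv (fun t' => f z t') t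

/-- Second partial derivative in the first (space) variable. -/
def pzz (f : ℝ → ℝ → ℝ) (z t : ℝ) : ℝ := deriv (fun z' => pz f z' t) z

lemma erf_hasDerivAt (x : ℝ) : HasDerivAt erf (2 / Real.sqrt π * Real.exp (-x ^ 2)) x := by
  have hc : Continuous fun u : ℝ => Real.exp (-u ^ 2) := by continuity
  exact ((hc.integral_hasStrictDerivAt 0 x).hasDerivAt).const_mul (2 / Real.sqrt π)

lemma erf_zero : erf 0 = 0 := by simp [erf]

lemma erf_pos {x : ℝ} (hx : 0 < x) : 0 < erf x := by
  have hc : Continuous fun u : ℝ => Real.exp (-u ^ 2) := by continuity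
  exact mul_pos (div_pos two_pos (Real.sqrt_pos.2 Real.pi_pos))
    (intervalIntegral.intervalIntegral_pos_of_pos (hc.intervalIntegrable _ _)
      (fun u => Real.exp_pos _) hx)

lemma Fz_deriv (u z : ℝ) (hu : 0 < u) :
    HasDerivAt (fun z => Real.exp (-z ^ 2 / (4 * u ^ 2)) +
        z * Real.sqrt π / (2 * u) * erf (z / (2 * u)))
      (Real.sqrt π / (2 * u) * erf (z / (2 * u))) z := by
  have hπ : Real.sqrt π ≠ 0 := (Real.sqrt_pos.2 Real.pi_pos).ne'
  have h1 : HasDerivAt (fun z : ℝ => -z ^ 2 / (4 * u ^ 2)) (-(2 * z) / (4 * u ^ 2)) z := by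
    have := ((hasDerivAt_pow 2 z).neg).div_const (4 * u ^ 2)
    simpa using this
  have hE := h1.exp
  have h2 : HasDerivAt (fun z : ℝ => z / (2 * u)) (1 / (2 * u)) z := by
    simpa using (hasDerivAt_id z).div_const (2 * u)
  have h3 := (erf_hasDerivAt (z / (2 * u))).comp z h2
  have h4 : HasDerivAt (fun z : ℝ => z * Real.sqrt π / (2 * u)) (Real.sqrt π / (2 * u)) z := by
    simpa using ((hasDerivAt_id z).mul_const (Real.sqrt π)).div_const (2 * u)
  have total := hE.add (h4.mul h3)
  have hsq : -(z / (2 * u)) ^ 2 = -z ^ 2 / (4 * u ^ 2) := by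
    rw [div_pow, neg_div, mul_pow]
    norm_num
  rw [hsq] at total
  refine total.congr_deriv ?_
  have hu0 : u ≠ 0 := hu.ne'
  simp only [Function.comp_apply]
  field_simp
  ring

lemma Ft_deriv (z u : ℝ) (hu : 0 < u) :
    HasDerivAt (fun t => Real.sqrt t * Real.exp (-z ^ 2 / (4 * t)) +
        z * Real.sqrt π / 2 * erf (z / (2 * Real.sqrt t)))
      (Real.exp (-z ^ 2 / (4 * u ^ 2)) / (2 * u)) (u ^ 2) := by
  have hπ : Real.sqrt π ≠ 0 := (Real.sqrt_pos.2 Real.pi_pos).ne'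
  have hu2 : (0:ℝ) < u ^ 2 := by positivity
  have hru : Real.sqrt (u ^ 2) = u := Real.sqrt_sq hu.le
  have hsqrt : HasDerivAt Real.sqrt (1 / (2 * u)) (u ^ 2) := by
    have := Real.hasDerivAt_sqrt hu2.ne'
    rwa [hru] at this
  have hinner : HasDerivAt (fun t : ℝ => -z ^ 2 / (4 * t))
      ((0 * (4 * u ^ 2) - -z ^ 2 * 4) / (4 * u ^ 2) ^ 2) (u ^ 2) := by
    have h4t : HasDerivAt (fun t : ℝ => 4 * t) 4 (u ^ 2) := by
      simpa using (hasDerivAt_id (u ^ 2 : ℝ)).const_mul (4 : ℝ)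
    exact (hasDerivAt_const _ (-z ^ 2)).div h4t (by positivity)
  have hE := hinner.exp
  have term1 := hsqrt.mul hE
  have hg : HasDerivAt (fun t : ℝ => z / (2 * Real.sqrt t))
      ((0 * (2 * Real.sqrt (u ^ 2)) - z * (2 * (1 / (2 * u)))) / (2 * Real.sqrt (u ^ 2)) ^ 2)
      (u ^ 2) := by
    have h2s : HasDerivAt (fun t : ℝ => 2 * Real.sqrt t) (2 * (1 / (2 * u))) (u ^ 2) :=
      hsqrt.const_mul 2
    exact (hasDerivAt_const _ z).div h2s (by rw [hru]; positivity)
  have herf := ((erf_hasDerivAt (z / (2 * Real.sqrt (u ^ 2)))).comp (u ^ 2) hg).const_mul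
    (z * Real.sqrt π / 2)
  have total := term1.add herf
  have hsq : -(z / (2 * Real.sqrt (u ^ 2))) ^ 2 = -z ^ 2 / (4 * u ^ 2) := by
    rw [hru, div_pow, neg_div, mul_pow]
    norm_num
  rw [hsq, hru] at total
  refine total.congr_deriv ?_
  have hu0 : u ≠ 0 := hu.ne'
  field_simp
  ring

/-- the explicit similarity solution of the Stefan problem with
Robin (`ε = 1`) or Neumann (`ε = 0`) condition at the fixed face. -/
theorem statement12 (ε v₀ wm₀ L₀ h₀ : ℝ) (hε : ε = 0 ∨ ε = 1)
    (h1 : 0 < v₀) (h2 : 0 < wm₀) (h3 : 0 < L₀) (h4 : 0 < h₀)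
    (h5 : ε * wm₀ < v₀)
    (γ : ℝ) (hγ_pos : 0 < γ)
    (hγ : (2 * v₀ * h₀ - L₀ * γ) * Real.exp (-γ ^ 2) =
      (wm₀ + L₀ * γ ^ 2) * (Real.sqrt π * erf γ + 2 * h₀ * ε))
    (hγ_uniq : ∀ γ' : ℝ, 0 < γ' →
      (2 * v₀ * h₀ - L₀ * γ') * Real.exp (-γ' ^ 2) =
        (wm₀ + L₀ * γ' ^ 2) * (Real.sqrt π * erf γ' + 2 * h₀ * ε) → γ' = γ)
    (s : ℝ → ℝ) (hs : ∀ t, s t = 2 * γ * Real.sqrt t)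
    (w : ℝ → ℝ → ℝ)
    (hw : ∀ t > 0, ∀ z : ℝ,
      w z t = (2 * Real.sqrt t * (2 * h₀ * v₀ - L₀ * γ) /
          (Real.sqrt π * erf γ + 2 * h₀ * ε)) *
          (Real.exp (-z ^ 2 / (4 * t)) +
            (z * Real.sqrt π / (2 * Real.sqrt t)) * erf (z / (2 * Real.sqrt t))) -
        z * ((2 * L₀ * γ * h₀ * ε + 2 * h₀ * v₀ * Real.sqrt π * erf γ) /
          (Real.sqrt π * erf γ + 2 * h₀ * ε))) :
    (∀ t > 0,
      (∀ z, 0 < z → z < s t → pzz w z t = pt w z t) ∧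
      pz w (s t) t = -L₀ * Real.sqrt t * deriv s t ∧
      w (s t) t = 2 * wm₀ * Real.sqrt t ∧
      pz w 0 t = (h₀ / Real.sqrt t) * (ε * w 0 t - 2 * v₀ * Real.sqrt t)) ∧
    s 0 = 0 := by
  have hπ : (0:ℝ) < Real.sqrt π := Real.sqrt_pos.2 Real.pi_pos
  have herfγ : 0 < erf γ := erf_pos hγ_pos
  have hD : 0 < Real.sqrt π * erf γ + 2 * h₀ * ε := by
    rcases hε with h | h <;> subst h <;> nlinarith [mul_pos hπ herfγ]
  set D := Real.sqrt π * erf γ + 2 * h₀ * ε with hD_def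
  set K := 2 * h₀ * v₀ - L₀ * γ with hK_def
  set B := (2 * L₀ * γ * h₀ * ε + 2 * h₀ * v₀ * Real.sqrt π * erf γ) / D with hB_def
  constructor
  · rintro t ht
    obtain ⟨u, hu, rfl⟩ : ∃ u, 0 < u ∧ t = u ^ 2 :=
      ⟨Real.sqrt t, Real.sqrt_pos.2 ht, (Real.sq_sqrt ht.le).symm⟩
    have hru : Real.sqrt (u ^ 2) = u := Real.sqrt_sq hu.le
    have hwz : ∀ z : ℝ, w z (u ^ 2) =
        2 * u * K / D * (Real.exp (-z ^ 2 / (4 * u ^ 2)) +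
          z * Real.sqrt π / (2 * u) * erf (z / (2 * u))) - z * B := by
      intro z
      have := hw (u ^ 2) (by positivity) z
      rw [hru] at this
      exact this
    -- space derivative of w at every z
    have hpz : ∀ z : ℝ, HasDerivAt (fun z' => w z' (u ^ 2))
        (2 * u * K / D * (Real.sqrt π / (2 * u) * erf (z / (2 * u))) - B) z := by
      intro z
      have h := ((Fz_deriv u z hu).const_mul (2 * u * K / D)).sub
        ((hasDerivAt_id z).mul_const B)
      have hfun : (fun z' => w z' (u ^ 2)) =
          fun z' => 2 * u * K / D * (Real.exp (-z' ^ 2 / (4 * u ^ 2)) +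
            z' * Real.sqrt π / (2 * u) * erf (z' / (2 * u))) - z' * B := funext hwz
      rw [hfun]
      rw [one_mul] at h
      exact h
    have hpz_val : ∀ z : ℝ, pz w z (u ^ 2) =
        2 * u * K / D * (Real.sqrt π / (2 * u) * erf (z / (2 * u))) - B := by
      intro z
      simp only [pz]
      exact (hpz z).deriv
    have hst : s (u ^ 2) = 2 * γ * u := by rw [hs, hru]
    refine ⟨fun z _ _ => ?_, ?_, ?_, ?_⟩
    · -- heat equation
      have hpzz : pzz w z (u ^ 2) = 2 * u * K / D * (Real.sqrt π / (2 * u) *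
          (2 / Real.sqrt π * Real.exp (-z ^ 2 / (4 * u ^ 2)) * (1 / (2 * u)))) := by
        simp only [pzz]
        have hfun : (fun z' => pz w z' (u ^ 2)) =
            fun z' => 2 * u * K / D * (Real.sqrt π / (2 * u) * erf (z' / (2 * u))) - B :=
          funext hpz_val
        rw [hfun]
        have h2 : HasDerivAt (fun z' : ℝ => z' / (2 * u)) (1 / (2 * u)) z := by
          simpa using (hasDerivAt_id z).div_const (2 * u)
        have h := ((((erf_hasDerivAt (z / (2 * u))).comp z h2).const_mul
          (Real.sqrt π / (2 * u))).const_mul (2 * u * K / D)).sub_const B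
        have hsq : -(z / (2 * u)) ^ 2 = -z ^ 2 / (4 * u ^ 2) := by
          rw [div_pow, neg_div, mul_pow]
          norm_num
        rw [hsq] at h
        exact h.deriv
      have hev : (fun t' => w z t') =ᶠ[nhds (u ^ 2)]
          (fun t' => 2 * K / D * (Real.sqrt t' * Real.exp (-z ^ 2 / (4 * t')) +
            z * Real.sqrt π / 2 * erf (z / (2 * Real.sqrt t'))) - z * B) := by
        filter_upwards [eventually_gt_nhds (show (0:ℝ) < u ^ 2 by positivity)] with t' ht'
        rw [hw t' ht']
        have h0 : Real.sqrt t' ≠ 0 := (Real.sqrt_pos.2 ht').ne'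
        field_simp
      have hpt : pt w z (u ^ 2) = 2 * K / D * (Real.exp (-z ^ 2 / (4 * u ^ 2)) / (2 * u)) := by
        simp only [pt]
        rw [Filter.EventuallyEq.deriv_eq hev]
        exact (((Ft_deriv z u hu).const_mul (2 * K / D)).sub_const (z * B)).deriv
      rw [hpzz, hpt]
      field_simp
    · -- Stefan condition
      have hs' : deriv s (u ^ 2) = γ / u := by
        have hfun : s = fun t => 2 * γ * Real.sqrt t := funext hs
        rw [hfun]
        have h := (Real.hasDerivAt_sqrt (show (u ^ 2 : ℝ) ≠ 0 by positivity)).const_mul (2 * γ)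
        rw [hru] at h
        rw [h.deriv]
        field_simp
      rw [hst, hru, hs', hpz_val (2 * γ * u)]
      have harg : 2 * γ * u / (2 * u) = γ := by field_simp
      rw [harg, hB_def, hK_def, hD_def]
      have hD' : Real.sqrt π * erf γ + 2 * h₀ * ε ≠ 0 := hD.ne'
      field_simp
      ring
    · -- free boundary temperature
      rw [hst, hru, hwz (2 * γ * u)]
      have h1' : -(2 * γ * u) ^ 2 / (4 * u ^ 2) = -γ ^ 2 := by
        field_simp; ring
      have h2' : 2 * γ * u / (2 * u) = γ := by field_simp
      rw [h1', h2', hB_def, hK_def]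
      field_simp
      linear_combination hγ + L₀ * γ ^ 2 * hD_def
    · -- fixed face condition
      rw [hru, hpz_val 0, hwz 0]
      norm_num [erf_zero]
      rw [hB_def, hK_def, hD_def]
      have hD' : Real.sqrt π * erf γ + 2 * h₀ * ε ≠ 0 := hD.ne'
      field_simp
      ring
  · rw [hs]
    simp

end
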